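/- arXiv:1805.11075 — 4 statements merged into one kernel-verified Lean document; each statement's English description precedes it below -/
import Mathlib

section
/- Let H = ω(n̂₁ + n̂₂) act on the tensor product of two fermionic modes (each 2-dimensional), and let τ(β₁,β₂) be the product of two thermal states at inverse temperatures β₁, β₂ > 0. Then for every unitary U on the 4-dimensional space, Tr[H τ(β₁,β₂)] ≤ Tr[H U τ(β₁,β₂) U†]; i.e., the product of two fermionic thermal states of equal frequency is passive regardless of the temperatures. -/
open Matrix Kronecker Complex
set_option maxHeartbeats 2000000

/-- the product of two single-fermion thermal states of equal
frequency `ω` at inverse temperatures `β₁, β₂ > 0` is passive with respect to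
`H = ω(n̂⊗1 + 1⊗n̂)`: for every unitary `U` on the 4-dimensional space,
`Tr[H τ] ≤ Tr[H U τ U†]`. -/
theorem stmt1 (ω β₁ β₂ : ℝ) (hω : 0 < ω) (hβ₁ : 0 < β₁) (hβ₂ : 0 < β₂)
    (nhat : Matrix (Fin 2) (Fin 2) ℂ) (hn : nhat = Matrix.diagonal ![0, 1])
    (thermal : ℝ → Matrix (Fin 2) (Fin 2) ℂ)
    (hth : ∀ β, thermal β = ((1 + Real.exp (-β * ω))⁻¹ : ℝ) •
      Matrix.diagonal ![1, (Real.exp (-β * ω) : ℂ)])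
    (H τ : Matrix (Fin 2 × Fin 2) (Fin 2 × Fin 2) ℂ)
    (hH : H = (ω : ℂ) • (nhat ⊗ₖ (1 : Matrix (Fin 2) (Fin 2) ℂ)
      + (1 : Matrix (Fin 2) (Fin 2) ℂ) ⊗ₖ nhat))
    (hτ : τ = thermal β₁ ⊗ₖ thermal β₂) :
    ∀ U : Matrix (Fin 2 × Fin 2) (Fin 2 × Fin 2) ℂ,
      U ∈ Matrix.unitaryGroup (Fin 2 × Fin 2) ℂ →
      (H * τ).trace.re ≤ (H * (U * τ * Uᴴ)).trace.re := by
  intro U hU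
  set x := Real.exp (-β₁ * ω) with hxdef
  set y := Real.exp (-β₂ * ω) with hydef
  have hx0 : 0 < x := Real.exp_pos _
  have hy0 : 0 < y := Real.exp_pos _
  have hx1 : x < 1 := by
    rw [hxdef]; apply Real.exp_lt_one_iff.mpr; nlinarith
  have hy1 : y < 1 := by
    rw [hydef]; apply Real.exp_lt_one_iff.mpr; nlinarith
  set c : ℝ := (1 + x)⁻¹ * (1 + y)⁻¹ with hcdef
  have hc : 0 < c := by positivity
  set hR : Fin 2 × Fin 2 → ℝ := fun p => ω * ((![0,1] : Fin 2 → ℝ) p.1 + ![0,1] p.2) with hhR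
  set tR : Fin 2 × Fin 2 → ℝ := fun p => c * ((![1,x] : Fin 2 → ℝ) p.1 * ![1,y] p.2) with htR
  have hHd : H = Matrix.diagonal (fun p => (hR p : ℂ)) := by
    rw [hH, hn]
    ext ⟨i,j⟩ ⟨k,l⟩
    fin_cases i <;> fin_cases j <;> fin_cases k <;> fin_cases l <;>
      simp [Matrix.kroneckerMap_apply, Matrix.one_apply, Matrix.diagonal_apply, Prod.ext_iff,
        Fin.ext_iff, hhR] <;> norm_num
  have hτd : τ = Matrix.diagonal (fun p => (tR p : ℂ)) := by
    rw [hτ, hth, hth]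
    ext ⟨i,j⟩ ⟨k,l⟩
    fin_cases i <;> fin_cases j <;> fin_cases k <;> fin_cases l <;>
      simp [-Complex.ofReal_exp, Matrix.kroneckerMap_apply, Matrix.diagonal_apply, Prod.ext_iff,
        Fin.ext_iff, htR, hcdef, hxdef, hydef] <;> push_cast <;> ring_nf
  -- trace of H τ
  have h1 : (H * τ).trace.re = ∑ p : Fin 2 × Fin 2, hR p * tR p := by
    rw [hHd, hτd, Matrix.diagonal_mul_diagonal, Matrix.trace_diagonal, Complex.re_sum]
    congr 1; funext p
    rw [← Complex.ofReal_mul, Complex.ofReal_re]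
  have h2 : (H * (U * τ * Uᴴ)).trace.re
      = ∑ i : Fin 2 × Fin 2, ∑ j : Fin 2 × Fin 2, hR i * tR j * Complex.normSq (U i j) := by
    rw [hHd, hτd]
    have : ∀ i : Fin 2 × Fin 2,
        (Matrix.diagonal (fun p => (hR p : ℂ)) * (U * Matrix.diagonal (fun p => (tR p : ℂ)) * Uᴴ)) i i
        = ∑ j : Fin 2 × Fin 2, ((hR i * tR j * Complex.normSq (U i j) : ℝ) : ℂ) := by
      intro i
      rw [Matrix.diagonal_mul, Matrix.mul_apply, Finset.mul_sum]
      congr 1; funext j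
      rw [Matrix.mul_diagonal, Matrix.conjTranspose_apply]
      have : U i j * (tR j : ℂ) * star (U i j) = (tR j : ℂ) * (U i j * (starRingEnd ℂ) (U i j)) := by
        simp [RCLike.star_def]; ring
      rw [this, Complex.mul_conj]
      push_cast; ring
    rw [Matrix.trace]
    simp only [Matrix.diag, this, Complex.re_sum, Complex.ofReal_re]
  rw [h1, h2]
  -- doubly stochastic constraints
  have hrow : ∀ i : Fin 2 × Fin 2, ∑ j : Fin 2 × Fin 2, Complex.normSq (U i j) = 1 := by
    intro i
    have h := Matrix.mem_unitaryGroup_iff.mp hU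
    have h2 := congrFun (congrFun h i) i
    rw [Matrix.mul_apply, Matrix.one_apply_eq] at h2
    have h3 : ∑ j : Fin 2 × Fin 2, ((Complex.normSq (U i j) : ℝ) : ℂ) = 1 := by
      rw [← h2]; congr 1; funext j
      rw [Matrix.star_apply, ← Complex.mul_conj]
      rfl
    have := congrArg Complex.re h3
    rw [Complex.re_sum] at this
    simpa using this
  have hcol : ∀ j : Fin 2 × Fin 2, ∑ i : Fin 2 × Fin 2, Complex.normSq (U i j) = 1 := by
    intro j
    have h := Matrix.mem_unitaryGroup_iff'.mp hU
    have h2 := congrFun (congrFun h j) j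
    rw [Matrix.mul_apply, Matrix.one_apply_eq] at h2
    have h3 : ∑ i : Fin 2 × Fin 2, ((Complex.normSq (U i j) : ℝ) : ℂ) = 1 := by
      rw [← h2]; congr 1; funext i
      rw [Matrix.star_apply, show star (U i j) * U i j = U i j * (starRingEnd ℂ) (U i j) from by
        rw [RCLike.star_def]; ring, Complex.mul_conj]
    have := congrArg Complex.re h3
    rw [Complex.re_sum] at this
    simpa using this
  -- expand everything
  have hr0 := hrow (0,0)
  have hr3 := hrow (1,1)
  have hc0 := hcol (0,0)
  have hc1 := hcol (0,1)
  have hc2 := hcol (1,0)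
  have hc3 := hcol (1,1)
  clear hrow hcol hHd hτd h1 h2 hH hτ hth hn hU
  clear hxdef hydef hcdef
  clear_value x y c
  simp only [Fintype.sum_prod_type, Fin.sum_univ_two, hhR, htR,
    Matrix.cons_val_zero, Matrix.cons_val_one, Matrix.head_cons] at hr0 hr3 hc0 hc1 hc2 hc3 ⊢
  clear hhR htR
  clear_value hR tR
  set B00 := Complex.normSq (U (0,0) (0,0)) with hB00
  set B01 := Complex.normSq (U (0,0) (0,1)) with hB01
  set B02 := Complex.normSq (U (0,0) (1,0)) with hB02
  set B03 := Complex.normSq (U (0,0) (1,1)) with hB03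
  set B10 := Complex.normSq (U (0,1) (0,0)) with hB10
  set B11 := Complex.normSq (U (0,1) (0,1)) with hB11
  set B12 := Complex.normSq (U (0,1) (1,0)) with hB12
  set B13 := Complex.normSq (U (0,1) (1,1)) with hB13
  set B20 := Complex.normSq (U (1,0) (0,0)) with hB20
  set B21 := Complex.normSq (U (1,0) (0,1)) with hB21
  set B22 := Complex.normSq (U (1,0) (1,0)) with hB22
  set B23 := Complex.normSq (U (1,0) (1,1)) with hB23
  set B30 := Complex.normSq (U (1,1) (0,0)) with hB30
  set B31 := Complex.normSq (U (1,1) (0,1)) with hB31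
  set B32 := Complex.normSq (U (1,1) (1,0)) with hB32
  set B33 := Complex.normSq (U (1,1) (1,1)) with hB33
  have n01 : 0 ≤ B01 := hB01 ▸ Complex.normSq_nonneg _
  have n02 : 0 ≤ B02 := hB02 ▸ Complex.normSq_nonneg _
  have n03 : 0 ≤ B03 := hB03 ▸ Complex.normSq_nonneg _
  have n30 : 0 ≤ B30 := hB30 ▸ Complex.normSq_nonneg _
  have n31 : 0 ≤ B31 := hB31 ▸ Complex.normSq_nonneg _
  have n32 : 0 ≤ B32 := hB32 ▸ Complex.normSq_nonneg _
  have hxy1 : x * y ≤ 1 := le_trans (mul_le_of_le_one_right hx0.le hy1.le) hx1.le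
  have hS : 0 ≤ B01*(1-y) + B02*(1-x) + B03*(1-x*y) + B30*(1-x*y) + B31*(y-x*y) + B32*(x-x*y) := by
    have e1 : 0 ≤ B01*(1-y) := mul_nonneg n01 (by linarith)
    have e2 : 0 ≤ B02*(1-x) := mul_nonneg n02 (by linarith)
    have e3 : 0 ≤ B03*(1-x*y) := mul_nonneg n03 (by linarith)
    have e4 : 0 ≤ B30*(1-x*y) := mul_nonneg n30 (by linarith)
    have e5 : 0 ≤ B31*(y-x*y) := mul_nonneg n31 (by nlinarith)
    have e6 : 0 ≤ B32*(x-x*y) := mul_nonneg n32 (by nlinarith)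
    linarith
  have hS' : 0 ≤ ω * c * (B01*(1-y) + B02*(1-x) + B03*(1-x*y) + B30*(1-x*y) + B31*(y-x*y) + B32*(x-x*y)) :=
    mul_nonneg (mul_nonneg hω.le hc.le) hS
  have key : ω*c*(B10 + B11*y + B12*x + B13*(x*y))
      + ω*c*(B20 + B21*y + B22*x + B23*(x*y))
      + 2*(ω*c)*(B30 + B31*y + B32*x + B33*(x*y))
      = ω*c*(y + x + 2*(x*y))
      + ω*c*(B01*(1-y) + B02*(1-x) + B03*(1-x*y) + B30*(1-x*y) + B31*(y-x*y) + B32*(x-x*y)) := by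
    linear_combination (ω*c)*hc0 + (ω*c*y)*hc1 + (ω*c*x)*hc2 + (ω*c*(x*y))*hc3
      - (ω*c)*hr0 + (ω*c*(x*y))*hr3
  nlinarith [key, hS']
end

section
/- Let τ(β₁,β₂,β₃) be the product of three single-fermion thermal states of equal frequency ω > 0 at inverse temperatures β₁, β₂, β₃ > 0, with total Hamiltonian H = ω(n̂₁+n̂₂+n̂₃). If β₂ > β₁ + β₃, then τ(β₁,β₂,β₃) is non-passive: the unitary U that swaps the Fock basis states |010⟩ and |101⟩ (acting as identity elsewhere) satisfies Tr[H τ] > Tr[H U τ U†]. -/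
open Matrix Kronecker

/-- for the product `τ(β₁,β₂,β₃)` of three single-fermion thermal
states of equal frequency `ω > 0`, with total Hamiltonian
`H = ω(n̂₁+n̂₂+n̂₃)`, if `β₂ > β₁ + β₃` then the unitary swapping the Fock
states `|010⟩` and `|101⟩` strictly lowers the average energy:
`Tr[H τ] > Tr[H U τ Uᵀ]`; hence `τ` is non-passive. -/
theorem stmt4 (ω β₁ β₂ β₃ : ℝ) (hω : 0 < ω)
    (hβ₁ : 0 < β₁) (hβ₂ : 0 < β₂) (hβ₃ : 0 < β₃)
    (hcond : β₁ + β₃ < β₂)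
    (nhat : Matrix (Fin 2) (Fin 2) ℝ) (hn : nhat = Matrix.diagonal ![0, 1])
    (thermal : ℝ → Matrix (Fin 2) (Fin 2) ℝ)
    (hth : ∀ β, thermal β = (1 + Real.exp (-β * ω))⁻¹ •
      Matrix.diagonal ![1, Real.exp (-β * ω)])
    (H τ U : Matrix ((Fin 2 × Fin 2) × Fin 2) ((Fin 2 × Fin 2) × Fin 2) ℝ)
    (hH : H = ω • ((nhat ⊗ₖ (1 : Matrix (Fin 2) (Fin 2) ℝ)) ⊗ₖ (1 : Matrix (Fin 2) (Fin 2) ℝ)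
      + ((1 : Matrix (Fin 2) (Fin 2) ℝ) ⊗ₖ nhat) ⊗ₖ (1 : Matrix (Fin 2) (Fin 2) ℝ)
      + ((1 : Matrix (Fin 2) (Fin 2) ℝ) ⊗ₖ (1 : Matrix (Fin 2) (Fin 2) ℝ)) ⊗ₖ nhat))
    (hτ : τ = (thermal β₁ ⊗ₖ thermal β₂) ⊗ₖ thermal β₃)
    (hU : U = (Equiv.swap (((0 : Fin 2), (1 : Fin 2)), (0 : Fin 2))
      (((1 : Fin 2), (0 : Fin 2)), (1 : Fin 2))).permMatrix ℝ) :
    (H * (U * τ * Uᵀ)).trace < (H * τ).trace := by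
  subst hn hH hτ hU
  simp only [hth]
  have e1 := Real.exp_pos (-β₁ * ω)
  have e2 := Real.exp_pos (-β₂ * ω)
  have e3 := Real.exp_pos (-β₃ * ω)
  have key : Real.exp (-β₂ * ω) < Real.exp (-β₁ * ω) * Real.exp (-β₃ * ω) := by
    rw [← Real.exp_add]
    apply Real.exp_lt_exp.2
    nlinarith
  set x := Real.exp (-β₁ * ω)
  set y := Real.exp (-β₂ * ω)
  set z := Real.exp (-β₃ * ω)
  simp [Matrix.trace, Matrix.mul_apply, Fintype.sum_prod_type, Fin.sum_univ_succ,
    Matrix.kroneckerMap_apply, Matrix.diagonal, Equiv.Perm.permMatrix, Matrix.one_apply,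
    Equiv.swap_apply_def, Fin.isValue, Equiv.toPEquiv_apply, Prod.ext_iff]
  have ha : (0:ℝ) < (1 + x)⁻¹ := by positivity
  have hb : (0:ℝ) < (1 + y)⁻¹ := by positivity
  have hc : (0:ℝ) < (1 + z)⁻¹ := by positivity
  have hd : 0 < ω * ((1 + x)⁻¹ * ((1 + y)⁻¹ * (1 + z)⁻¹)) := by positivity
  nlinarith [mul_pos hd (sub_pos.2 key)]
end

section
/- A real antisymmetric matrix Γ satisfies iΓ ≤ 𝟙 (as a Hermitian matrix inequality) if and only if Γ Γᵀ ≤ 𝟙, with equality ΓΓᵀ = 𝟙 if and only if all Williamson parameters satisfy |λⱼ| = 1. -/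
set_option linter.unusedSectionVars false

open Matrix
open scoped ComplexOrder

variable {ι : Type*} [Fintype ι] [DecidableEq ι]

lemma dotC (a b : ι → ℝ) :
    (fun k => ((a k : ℂ))) ⬝ᵥ (fun k => ((b k : ℂ))) = ((a ⬝ᵥ b : ℝ) : ℂ) := by
  simp [dotProduct]

lemma mulVecC (Γ : Matrix ι ι ℝ) (b : ι → ℝ) :
    (Γ.map (fun x => (x : ℂ))) *ᵥ (fun k => ((b k : ℂ)))
      = fun k => (((Γ *ᵥ b) k : ℝ) : ℂ) := by
  funext k
  exact (RingHom.map_mulVec Complex.ofRealHom Γ b k).symm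

lemma skew_dot (Γ : Matrix ι ι ℝ) (hΓ : Γᵀ = -Γ) (a : ι → ℝ) :
    a ⬝ᵥ (Γ *ᵥ a) = 0 := by
  have h : a ⬝ᵥ (Γ *ᵥ a) = -(a ⬝ᵥ (Γ *ᵥ a)) := by
    conv_lhs => rw [dotProduct_mulVec, ← mulVec_transpose, hΓ, neg_mulVec,
      neg_dotProduct, dotProduct_comm]
  linarith

lemma skew_cross (Γ : Matrix ι ι ℝ) (hΓ : Γᵀ = -Γ) (a b : ι → ℝ) :
    b ⬝ᵥ (Γ *ᵥ a) = -(a ⬝ᵥ (Γ *ᵥ b)) := by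
  conv_lhs => rw [dotProduct_mulVec, ← mulVec_transpose, hΓ, neg_mulVec,
    neg_dotProduct, dotProduct_comm]

lemma quadform (Γ : Matrix ι ι ℝ) (hΓ : Γᵀ = -Γ) (v : ι → ℂ) :
    star v ⬝ᵥ ((1 - Complex.I • Γ.map (fun x => (x : ℂ))) *ᵥ v)
      = ((((fun k => (v k).re) ⬝ᵥ (fun k => (v k).re)
          + (fun k => (v k).im) ⬝ᵥ (fun k => (v k).im)
          + 2 * ((fun k => (v k).re) ⬝ᵥ (Γ *ᵥ (fun k => (v k).im)))) : ℝ) : ℂ) := by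
  set a : ι → ℝ := fun k => (v k).re with ha
  set b : ι → ℝ := fun k => (v k).im with hb
  have hv : v = (fun k => ((a k : ℂ))) + Complex.I • (fun k => ((b k : ℂ))) := by
    funext k
    simp [ha, hb, Complex.ext_iff]
  have hstar : star v = (fun k => ((a k : ℂ))) - Complex.I • (fun k => ((b k : ℂ))) := by
    funext k
    simp [ha, hb, Complex.ext_iff]
  rw [hstar]
  conv_lhs => rw [hv]
  simp only [Matrix.sub_mulVec, Matrix.one_mulVec, smul_mulVec, mulVec_add,
    mulVec_smul, mulVecC, sub_dotProduct, dotProduct_sub, add_dotProduct,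
    dotProduct_add, smul_dotProduct, dotProduct_smul, smul_eq_mul, dotC]
  rw [skew_dot Γ hΓ a, skew_dot Γ hΓ b, skew_cross Γ hΓ a b, dotProduct_comm b a]
  push_cast
  ring_nf
  simp [Complex.I_sq]

lemma dot_self_nonneg (a : ι → ℝ) : 0 ≤ a ⬝ᵥ a := by
  apply Finset.sum_nonneg
  intro i _
  exact mul_self_nonneg _

/-- a real antisymmetric matrix `Γ` satisfies `iΓ ≤ 𝟙` (as a
Hermitian matrix inequality) iff `Γ Γᵀ ≤ 𝟙`; moreover, given any Williamson
block-diagonalization `O Γ Oᵀ = ⨁ⱼ [[0, λⱼ],[−λⱼ, 0]]` with `O ∈ SO(2n)`,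
equality `Γ Γᵀ = 𝟙` holds iff all parameters satisfy `|λⱼ| = 1`. -/
theorem stmt11 (n : ℕ) (Γ : Matrix (Fin n × Fin 2) (Fin n × Fin 2) ℝ)
    (hΓ : Γᵀ = -Γ) :
    (((1 : Matrix (Fin n × Fin 2) (Fin n × Fin 2) ℂ)
        - Complex.I • Γ.map (fun x => (x : ℂ))).PosSemidef
      ↔ ((1 : Matrix (Fin n × Fin 2) (Fin n × Fin 2) ℝ) - Γ * Γᵀ).PosSemidef)
    ∧ ∀ (O : Matrix (Fin n × Fin 2) (Fin n × Fin 2) ℝ) (lam : Fin n → ℝ),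
        O * Oᵀ = 1 → O.det = 1 →
        O * Γ * Oᵀ = (fun p q =>
          if p.1 = q.1 then !![0, lam p.1; -lam p.1, 0] p.2 q.2 else 0) →
        (Γ * Γᵀ = 1 ↔ ∀ j, |lam j| = 1) := by
  constructor
  · -- part 1
    have hermC : ((1 : Matrix (Fin n × Fin 2) (Fin n × Fin 2) ℂ)
        - Complex.I • Γ.map (fun x => (x : ℂ))).IsHermitian := by
      have hMH : (Γ.map (fun x => (x : ℂ)))ᴴ = -(Γ.map (fun x => (x : ℂ))) := by
        ext i j
        have := congrFun (congrFun hΓ i) j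
        simp only [transpose_apply, Matrix.neg_apply] at this
        simp [Matrix.conjTranspose_apply, Matrix.map_apply, Complex.conj_ofReal, this]
      unfold Matrix.IsHermitian
      rw [conjTranspose_sub, conjTranspose_smul, conjTranspose_one, hMH]
      simp
    have hermR : ((1 : Matrix (Fin n × Fin 2) (Fin n × Fin 2) ℝ) - Γ * Γᵀ).IsHermitian := by
      unfold Matrix.IsHermitian
      ext i j
      simp only [Matrix.conjTranspose_apply, Matrix.sub_apply, Matrix.one_apply,
        Matrix.mul_apply, Matrix.transpose_apply, star_trivial]
      have hif : (if j = i then (1:ℝ) else 0) = (if i = j then 1 else 0) := by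
        simp [eq_comm]
      rw [hif]
      congr 1
      exact Finset.sum_congr rfl fun k _ => mul_comm _ _
    constructor
    · intro hC
      refine PosSemidef.of_dotProduct_mulVec_nonneg hermR fun x => ?_
      set y : (Fin n × Fin 2) → ℝ := Γᵀ *ᵥ x with hy
      have hnegy : Γ *ᵥ x = -y := by
        rw [hy, hΓ, neg_mulVec, neg_neg]
      set v : (Fin n × Fin 2) → ℂ := fun k => (y k : ℂ) + (x k : ℂ) * Complex.I with hv
      have hre : (fun k => (v k).re) = y := by funext k; simp [hv]
      have him : (fun k => (v k).im) = x := by funext k; simp [hv]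
      have h2 := hC.dotProduct_mulVec_nonneg v
      rw [quadform Γ hΓ v, hre, him, Complex.zero_le_real] at h2
      rw [hnegy, dotProduct_neg] at h2
      -- h2 : 0 ≤ y ⬝ᵥ y + x ⬝ᵥ x + 2 * -(y ⬝ᵥ y)
      have key : x ⬝ᵥ ((1 - Γ * Γᵀ) *ᵥ x) = x ⬝ᵥ x - y ⬝ᵥ y := by
        rw [Matrix.sub_mulVec, Matrix.one_mulVec, dotProduct_sub, ← mulVec_mulVec,
          dotProduct_mulVec, ← mulVec_transpose, ← hy]
      simp only [star_trivial]
      rw [key]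
      linarith
    · intro hR
      refine PosSemidef.of_dotProduct_mulVec_nonneg hermC fun v => ?_
      rw [quadform Γ hΓ v, Complex.zero_le_real]
      set a : (Fin n × Fin 2) → ℝ := fun k => (v k).re with ha
      set b : (Fin n × Fin 2) → ℝ := fun k => (v k).im with hb
      set g : (Fin n × Fin 2) → ℝ := Γ *ᵥ b with hg
      have h1 := hR.dotProduct_mulVec_nonneg b
      simp only [star_trivial] at h1
      have hbb : b ⬝ᵥ ((1 - Γ * Γᵀ) *ᵥ b) = b ⬝ᵥ b - g ⬝ᵥ g := by
        rw [Matrix.sub_mulVec, Matrix.one_mulVec, dotProduct_sub]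
        congr 1
        rw [← mulVec_mulVec, dotProduct_mulVec, ← mulVec_transpose, hΓ, neg_mulVec,
          neg_dotProduct, dotProduct_neg, neg_neg]
      rw [hbb] at h1
      have h2 : 0 ≤ (a + g) ⬝ᵥ (a + g) := dot_self_nonneg _
      rw [dotProduct_add, add_dotProduct, add_dotProduct, dotProduct_comm g a] at h2
      have h3 : 0 ≤ a ⬝ᵥ a := dot_self_nonneg a
      linarith
  · -- part 2
    intro O lam hOrth hdet hblock
    have h2 : Oᵀ * O = 1 := mul_eq_one_comm.mp hOrth
    set D : Matrix (Fin n × Fin 2) (Fin n × Fin 2) ℝ := (fun p q =>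
        if p.1 = q.1 then !![0, lam p.1; -lam p.1, 0] p.2 q.2 else 0) with hD
    have hΓeq : Γ = Oᵀ * D * O := by
      rw [← hblock]
      simp only [← Matrix.mul_assoc]
      rw [h2, Matrix.one_mul, Matrix.mul_assoc, h2, Matrix.mul_one]
    have hDD : D * Dᵀ = fun p q => if p = q then (lam p.1)^2 else 0 := by
      ext ⟨i, s⟩ ⟨k, t⟩
      simp only [Matrix.mul_apply, transpose_apply, Fintype.sum_prod_type]
      simp only [hD]
      by_cases h : i = k
      · subst h
        fin_cases s <;> fin_cases t <;>
          simp [Finset.sum_ite_eq, Fin.sum_univ_two, Prod.ext_iff, pow_two]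
      · simp [h, Prod.ext_iff]
    have hGG : Γ * Γᵀ = Oᵀ * (D * Dᵀ) * O := by
      rw [hΓeq]
      rw [Matrix.transpose_mul, Matrix.transpose_mul, Matrix.transpose_transpose]
      calc Oᵀ * D * O * (Oᵀ * (Dᵀ * O)) = Oᵀ * D * (O * Oᵀ) * (Dᵀ * O) := by
            simp only [Matrix.mul_assoc]
        _ = Oᵀ * (D * Dᵀ) * O := by rw [hOrth]; simp only [Matrix.mul_assoc, Matrix.mul_one]
    have hiff : Γ * Γᵀ = 1 ↔ D * Dᵀ = 1 := by
      constructor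
      · intro h
        have : O * (Γ * Γᵀ) * Oᵀ = D * Dᵀ := by
          rw [hGG]
          calc O * (Oᵀ * (D * Dᵀ) * O) * Oᵀ = (O * Oᵀ) * (D * Dᵀ) * (O * Oᵀ) := by
                simp only [Matrix.mul_assoc]
            _ = D * Dᵀ := by rw [hOrth]; simp
        rw [h] at this
        rw [← this, Matrix.mul_one, hOrth]
      · intro h
        rw [hGG, h, Matrix.mul_one, h2]
    rw [hiff, hDD]
    constructor
    · intro h j
      have := congrFun (congrFun h (j, 0)) (j, 0)
      simp [Matrix.one_apply] at this
      rcases this with hh | hh <;> simp [hh]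
    · intro h
      ext p q
      by_cases hpq : p = q
      · subst hpq
        have h1 : lam p.1 ^ 2 = 1 := by
          rcases abs_cases (lam p.1) with ⟨he, _⟩ | ⟨he, _⟩ <;> nlinarith [h p.1]
        simp [h1, Matrix.one_apply]
      · simp [hpq, Matrix.one_apply]
end

section
/- Applying the squeezing with optimal parameter r = −(1/2) arctan λ, λ = (e₁+e₂)/(a+b), to the standard-form covariance matrix with blocks a, b and correlations e₁, e₂ yields new parameters ã′ = ((a+b)/2)√(1+λ²) + (a−b)/2, b̃′ = ((a+b)/2)√(1+λ²) − (a−b)/2, and off-diagonal entries ±e with e = (e₁−e₂)/2; i.e., a′ as given by a′ = a cos²r − b sin²r − ((e₁+e₂)/2) sin 2r evaluates to ã′, and analogously for b′. -/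
open Real

/-- applying the two-mode squeezing with the optimal parameter
`r = −(1/2) arctan λ`, `λ = (e₁+e₂)/(a+b)` (with `a+b > 0`), to the
standard-form covariance-matrix parameters `a, b, e₁, e₂` yields
`a′ = ((a+b)/2)√(1+λ²) + (a−b)/2`, `b′ = ((a+b)/2)√(1+λ²) − (a−b)/2`,
`e₁′ = (e₁−e₂)/2` and `e₂′ = −(e₁−e₂)/2`. -/
theorem stmt15 (a b e₁ e₂ : ℝ) (hab : 0 < a + b)
    (lam r : ℝ) (hlam : lam = (e₁ + e₂) / (a + b))
    (hr : r = -(1 / 2) * Real.arctan lam)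
    (a' b' e₁' e₂' : ℝ)
    (ha' : a' = a * Real.cos r ^ 2 - b * Real.sin r ^ 2
      - (e₁ + e₂) / 2 * Real.sin (2 * r))
    (hb' : b' = -a * Real.sin r ^ 2 + b * Real.cos r ^ 2
      - (e₁ + e₂) / 2 * Real.sin (2 * r))
    (he₁' : e₁' = (a + b) / 2 * Real.sin (2 * r)
      + e₁ * Real.cos r ^ 2 - e₂ * Real.sin r ^ 2)
    (he₂' : e₂' = (a + b) / 2 * Real.sin (2 * r)
      + e₂ * Real.cos r ^ 2 - e₁ * Real.sin r ^ 2) :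
    a' = (a + b) / 2 * Real.sqrt (1 + lam ^ 2) + (a - b) / 2
      ∧ b' = (a + b) / 2 * Real.sqrt (1 + lam ^ 2) - (a - b) / 2
      ∧ e₁' = (e₁ - e₂) / 2
      ∧ e₂' = -((e₁ - e₂) / 2) := by
  have hab' : a + b ≠ 0 := ne_of_gt hab
  set S := Real.sqrt (1 + lam ^ 2) with hSdef
  have hSpos : 0 < S := Real.sqrt_pos.mpr (by positivity)
  have hSsq : S ^ 2 = 1 + lam ^ 2 := Real.sq_sqrt (by positivity)
  have hSne : S ≠ 0 := ne_of_gt hSpos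
  have h2r : 2 * r = -Real.arctan lam := by rw [hr]; ring
  have hcos2 : Real.cos (2 * r) = 1 / S := by
    rw [h2r, Real.cos_neg, Real.cos_arctan, one_div]
  have hsin2 : Real.sin (2 * r) = -lam / S := by
    rw [h2r, Real.sin_neg, Real.sin_arctan, neg_div]
  have hcossq : Real.cos r ^ 2 = (1 + Real.cos (2 * r)) / 2 := by
    rw [Real.cos_sq]; ring_nf
  have hsinsq : Real.sin r ^ 2 = (1 - Real.cos (2 * r)) / 2 := by
    have := Real.sin_sq_add_cos_sq r
    rw [hcossq] at this; linarith
  have hlameq : lam * (a + b) = e₁ + e₂ := by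
    rw [hlam]; field_simp
  refine ⟨?_, ?_, ?_, ?_⟩
  · rw [ha', hcossq, hsinsq, hcos2, hsin2]
    field_simp
    linear_combination (-(a + b)) * hSsq + (-lam) * hlameq
  · rw [hb', hcossq, hsinsq, hcos2, hsin2]
    field_simp
    linear_combination (-(a + b)) * hSsq + (-lam) * hlameq
  · rw [he₁', hcossq, hsinsq, hcos2, hsin2]
    field_simp
    linear_combination (-1) * hlameq
  · rw [he₂', hcossq, hsinsq, hcos2, hsin2]
    field_simp
    linear_combination (-1) * hlameq
end
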